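/- If d(s) = exp(sG) is strictly monotone with respect to ‖x‖ = √(xᵀPx) and ‖z‖_d ≤ ε‖y‖_d with 0 < ε ≤ 1, then ⌊d(ln(‖z‖_d/(ε‖y‖_d)))⌋ ≤ ‖d(-ln(ε‖y‖_d))z‖ ≤ 1 for y, z ≠ 0; conversely, if ‖d(-ln(ε‖y‖_d))z‖ ≤ 1 then ‖z‖_d ≤ ε‖y‖_d. -/

import Mathlib

open Matrix NormedSpace

noncomputable def dil {n : ℕ} (G : Matrix (Fin n) (Fin n) ℝ) (s : ℝ) :
    Matrix (Fin n) (Fin n) ℝ :=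
  NormedSpace.exp (s • G)

noncomputable def wnorm {n : ℕ} (P : Matrix (Fin n) (Fin n) ℝ) (x : Fin n → ℝ) : ℝ :=
  Real.sqrt (x ⬝ᵥ P.mulVec x)

/-- `⌊d(s)⌋ = inf_{‖u‖=1} ‖d(s)u‖`. -/
noncomputable def dinf {n : ℕ} (P G : Matrix (Fin n) (Fin n) ℝ) (s : ℝ) : ℝ :=
  sInf {r : ℝ | ∃ u : Fin n → ℝ, wnorm P u = 1 ∧ r = wnorm P (dil G s *ᵥ u)}

attribute [local instance] Matrix.linftyOpNormedRing Matrix.linftyOpNormedAlgebra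

namespace Stmt19Aux

variable {n : ℕ} (P G : Matrix (Fin n) (Fin n) ℝ)

lemma dil_add (a b : ℝ) : dil G (a + b) = dil G a * dil G b := by
  unfold dil
  rw [add_smul]
  exact NormedSpace.exp_add_of_commute (((Commute.refl G).smul_left a).smul_right b)

lemma dil_zero : dil G 0 = 1 := by simp [dil, NormedSpace.exp_zero]

lemma wnorm_nonneg (x : Fin n → ℝ) : 0 ≤ wnorm P x := Real.sqrt_nonneg _

lemma dil_mulVec_ne (x : Fin n → ℝ) (hx : x ≠ 0) (s : ℝ) : dil G s *ᵥ x ≠ 0 := by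
  intro h
  apply hx
  have h2 := congrArg (fun v => dil G (-s) *ᵥ v) h
  simpa [Matrix.mulVec_mulVec, ← dil_add, dil_zero, Matrix.one_mulVec] using h2

/-- derivative of the curve s ↦ dil G s *ᵥ x -/
lemma hasDerivAt_dil_mulVec (x : Fin n → ℝ) (s : ℝ) :
    HasDerivAt (fun u => dil G u *ᵥ x) (G *ᵥ (dil G s *ᵥ x)) s := by
  have hd : HasDerivAt (fun u : ℝ => NormedSpace.exp (u • G))
      (G * NormedSpace.exp (s • G)) s := hasDerivAt_exp_smul_const' G s
  let L : Matrix (Fin n) (Fin n) ℝ →L[ℝ] (Fin n → ℝ) :=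
    LinearMap.toContinuousLinearMap
      { toFun := fun A => A *ᵥ x
        map_add' := fun A B => Matrix.add_mulVec A B x
        map_smul' := fun c A => Matrix.smul_mulVec c A x }
  have := (L.hasFDerivAt.comp_hasDerivAt s hd)
  simp only [dil]
  rw [Matrix.mulVec_mulVec]
  exact this

/-- the quadratic form along the flow -/
lemma hasDerivAt_q (x : Fin n → ℝ) (s : ℝ) :
    HasDerivAt (fun u => (dil G u *ᵥ x) ⬝ᵥ P *ᵥ (dil G u *ᵥ x))
      ((dil G s *ᵥ x) ⬝ᵥ (P * G + Gᵀ * P) *ᵥ (dil G s *ᵥ x)) s := by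
  set f : ℝ → (Fin n → ℝ) := fun u => dil G u *ᵥ x with hf
  have hfd : HasDerivAt f (G *ᵥ f s) s := hasDerivAt_dil_mulVec G x s
  have hfi : ∀ i, HasDerivAt (fun u => f u i) ((G *ᵥ f s) i) s := by
    intro i
    have := ((ContinuousLinearMap.proj (R := ℝ) (φ := fun _ : Fin n => ℝ) i)).hasFDerivAt.comp_hasDerivAt s hfd
    exact this
  have hq : HasDerivAt (fun u => f u ⬝ᵥ P *ᵥ f u)
      ((G *ᵥ f s) ⬝ᵥ P *ᵥ f s + f s ⬝ᵥ P *ᵥ (G *ᵥ f s)) s := by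
    have : ∀ u, f u ⬝ᵥ P *ᵥ f u = ∑ i, ∑ j, f u i * (P i j * f u j) := by
      intro u
      simp [dotProduct, Matrix.mulVec, Finset.mul_sum]
    rw [show (fun u => f u ⬝ᵥ P *ᵥ f u) = fun u => ∑ i, ∑ j, f u i * (P i j * f u j) from
      funext this]
    have key : ∀ i j : Fin n, HasDerivAt (fun u => f u i * (P i j * f u j))
        ((G *ᵥ f s) i * (P i j * f s j) + f s i * (P i j * (G *ᵥ f s) j)) s := by
      intro i j
      exact (hfi i).mul ((hfi j).const_mul (P i j))
    have h2 : HasDerivAt (fun u => ∑ i, ∑ j, f u i * (P i j * f u j))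
        (∑ i, ∑ j, ((G *ᵥ f s) i * (P i j * f s j) + f s i * (P i j * (G *ᵥ f s) j))) s :=
      HasDerivAt.fun_sum (fun i _ => HasDerivAt.fun_sum (fun j _ => key i j))
    convert h2 using 1
    simp [dotProduct, Matrix.mulVec, Finset.mul_sum, Finset.sum_add_distrib]
  convert hq using 1
  rw [Matrix.add_mulVec, dotProduct_add, ← Matrix.mulVec_mulVec,
    ← Matrix.mulVec_mulVec, Matrix.dotProduct_mulVec (f s) Gᵀ,
    Matrix.vecMul_transpose, add_comm]

lemma wnorm_dil_strictMono (hP : P.PosDef) (hmon : (P * G + Gᵀ * P).PosDef)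
    (x : Fin n → ℝ) (hx : x ≠ 0) :
    StrictMono (fun s => wnorm P (dil G s *ᵥ x)) := by
  have hmono : StrictMono (fun u => (dil G u *ᵥ x) ⬝ᵥ P *ᵥ (dil G u *ᵥ x)) := by
    apply strictMono_of_deriv_pos
    intro s
    rw [(hasDerivAt_q P G x s).deriv]
    have := hmon.dotProduct_mulVec_pos (dil_mulVec_ne G x hx s)
    simpa using this
  intro a b hab
  have h0 : 0 ≤ (dil G a *ᵥ x) ⬝ᵥ P *ᵥ (dil G a *ᵥ x) := by
    have := hP.posSemidef.dotProduct_mulVec_nonneg (dil G a *ᵥ x); simpa using this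
  exact Real.sqrt_lt_sqrt h0 (hmono hab)

end Stmt19Aux

open Stmt19Aux in
/-- if `‖z‖_d ≤ ε‖y‖_d` with `0 < ε ≤ 1` then
`⌊d(ln(‖z‖_d/(ε‖y‖_d)))⌋ ≤ ‖d(-ln(ε‖y‖_d))z‖ ≤ 1` for `y, z ≠ 0`; conversely,
`‖d(-ln(ε‖y‖_d))z‖ ≤ 1` implies `‖z‖_d ≤ ε‖y‖_d`. -/
theorem stmt19 {n : ℕ} (P G : Matrix (Fin n) (Fin n) ℝ) (hP : P.PosDef)
    (hmon : (P * G + Gᵀ * P).PosDef)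
    (hnd : (Fin n → ℝ) → ℝ) (hnd0 : hnd 0 = 0)
    (hndpos : ∀ x : Fin n → ℝ, x ≠ 0 → 0 < hnd x)
    (hnddef : ∀ x : Fin n → ℝ, x ≠ 0 → wnorm P (dil G (-(Real.log (hnd x))) *ᵥ x) = 1)
    (ε : ℝ) (hε0 : 0 < ε) (hε1 : ε ≤ 1) :
    ∀ z y : Fin n → ℝ, z ≠ 0 → y ≠ 0 →
      (hnd z ≤ ε * hnd y →
        dinf P G (Real.log (hnd z / (ε * hnd y))) ≤
          wnorm P (dil G (-(Real.log (ε * hnd y))) *ᵥ z) ∧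
        wnorm P (dil G (-(Real.log (ε * hnd y))) *ᵥ z) ≤ 1) ∧
      (wnorm P (dil G (-(Real.log (ε * hnd y))) *ᵥ z) ≤ 1 → hnd z ≤ ε * hnd y) := by
  intro z y hz hy
  set a := hnd z with ha'
  set c := ε * hnd y with hc'
  have ha : 0 < a := hndpos z hz
  have hc : 0 < c := mul_pos hε0 (hndpos y hy)
  set u : Fin n → ℝ := dil G (-(Real.log a)) *ᵥ z with hu
  have hu1 : wnorm P u = 1 := hnddef z hz
  have hune : u ≠ 0 := by
    intro h; rw [h] at hu1; simp [wnorm] at hu1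
  set t := Real.log (a / c) with ht
  have key : dil G (-(Real.log c)) *ᵥ z = dil G t *ᵥ u := by
    rw [hu, Matrix.mulVec_mulVec, ← dil_add]
    congr 2
    rw [ht, Real.log_div (ne_of_gt ha) (ne_of_gt hc)]
    ring
  have hsm := wnorm_dil_strictMono P G hP hmon u hune
  have hg0 : wnorm P (dil G 0 *ᵥ u) = 1 := by rw [dil_zero, Matrix.one_mulVec]; exact hu1
  rw [key]
  constructor
  · intro hle
    constructor
    · apply csInf_le
      · exact ⟨0, fun r ⟨v, hv1, hv2⟩ => hv2 ▸ wnorm_nonneg P _⟩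
      · exact ⟨u, hu1, rfl⟩
    · have ht0 : t ≤ 0 := Real.log_nonpos (by positivity) ((div_le_one hc).2 hle)
      calc wnorm P (dil G t *ᵥ u) ≤ wnorm P (dil G 0 *ᵥ u) := hsm.monotone ht0
        _ = 1 := hg0
  · intro hle
    have ht0 : t ≤ 0 := by
      have h2 : (fun s => wnorm P (dil G s *ᵥ u)) t ≤ (fun s => wnorm P (dil G s *ᵥ u)) 0 := by
        simpa [hg0] using hle
      exact hsm.le_iff_le.mp h2
    have : a / c ≤ 1 := (Real.log_nonpos_iff (div_pos ha hc).le).mp ht0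
    exact (div_le_one hc).mp this
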